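/- The generating function for the number of Schmidt type 3-fold partition diamonds satisfies ∑_{n≥0} s_3(n) q^n = ∏_{n≥1} (1 + 4q^n + q^{2n}) / (1 - q^n)^4, as an identity of formal power series in q over ℤ. -/

import Mathlib

open Finset PowerSeries

/-- A `d`-fold partition diamond: nonnegative integers `a 0, a 1, …` together with
`b k j` (representing `b_{k+1, j+1}`) satisfying `a k ≥ b k j ≥ a (k+1)`,
with all but finitely many entries equal to zero. -/
structure DFold (d : ℕ) where
  a : ℕ → ℕ
  b : ℕ → Fin d → ℕ
  upper : ∀ k j, b k j ≤ a k
  lower : ∀ k j, a (k + 1) ≤ b k j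
  fin : ∃ N, ∀ k, N ≤ k → a k = 0

/-- `sFold d n`: the number of Schmidt type `d`-fold partition diamonds of `n`
(only the links `a k` are summed). -/
noncomputable def sFold (d n : ℕ) : ℕ :=
  Set.ncard {D : DFold d | (∑ᶠ k, D.a k) = n}

namespace SchmidtAux


lemma DFold.ext' {d : ℕ} {D E : DFold d} (ha : D.a = E.a) (hb : D.b = E.b) : D = E := by
  cases D; cases E; cases ha; cases hb; rfl

lemma a_anti (D : DFold 3) : Antitone D.a :=
  antitone_nat_of_succ_le fun k => (D.lower k 0).trans (D.upper k 0)

lemma finsum_a_eq (D : DFold 3) {M : ℕ} (hM : ∀ j, M ≤ j → D.a j = 0) :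
    ∑ᶠ i, D.a i = ∑ i ∈ range M, D.a i := by
  apply finsum_eq_sum_of_support_subset
  intro x hx
  simp only [Function.mem_support] at hx
  simp only [coe_range, Set.mem_Iio]
  by_contra h
  exact hx (hM x (by omega))

lemma a_eventually_zero (D : DFold 3) {k : ℕ} (hk : ∑ᶠ i, D.a i = k) :
    ∀ j, k ≤ j → D.a j = 0 := by
  intro j hj
  by_contra h
  obtain ⟨N0, hN0⟩ := D.fin
  have hM : ∀ i, max N0 (j+1) ≤ i → D.a i = 0 := fun i hi => hN0 i (by omega)
  rw [finsum_a_eq D hM] at hk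
  have h1 : ∑ i ∈ range (j+1), D.a i ≤ ∑ i ∈ range (max N0 (j+1)), D.a i :=
    Finset.sum_le_sum_of_subset (by apply Finset.range_subset_range.2; omega)
  have h2 : (range (j+1)).card • 1 ≤ ∑ i ∈ range (j+1), D.a i := by
    apply Finset.card_nsmul_le_sum
    intro x hx
    simp only [mem_range] at hx
    have := a_anti D (by omega : x ≤ j)
    omega
  simp only [card_range, smul_eq_mul, mul_one] at h2
  omega

lemma a_le_sum (D : DFold 3) {k : ℕ} (hk : ∑ᶠ i, D.a i = k) (j : ℕ) : D.a j ≤ k := by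
  obtain ⟨N0, hN0⟩ := D.fin
  have hM : ∀ i, max N0 (j+1) ≤ i → D.a i = 0 := fun i hi => hN0 i (by omega)
  rw [finsum_a_eq D hM] at hk
  have := Finset.single_le_sum (f := D.a) (fun i _ => Nat.zero_le _)
    (Finset.mem_range.2 (by omega : j < max N0 (j+1)))
  omega

lemma sum_range_a (D : DFold 3) {k : ℕ} (hk : ∑ᶠ i, D.a i = k) :
    ∑ i ∈ range k, D.a i = k := by
  rw [← finsum_a_eq D (a_eventually_zero D hk), hk]

lemma tele1 (a : ℕ → ℕ) (ha : ∀ i, a (i+1) ≤ a i) (n : ℕ) :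
    ∑ i ∈ range n, (i+1) * (a i - a (i+1)) + n * a n = ∑ i ∈ range n, a i := by
  induction n with
  | zero => simp
  | succ n ih =>
    rw [sum_range_succ, sum_range_succ (f := a)]
    have h1 : (n+1) * (a n - a (n+1)) + (n+1) * a (n+1) = (n+1) * a n := by
      rw [Nat.mul_sub, Nat.sub_add_cancel (Nat.mul_le_mul_left _ (ha n))]
    have h2 : (n+1) * a n = n * a n + a n := by ring
    omega

lemma tele2 (g : ℕ → ℕ) (k : ℕ) :
    ∑ j ∈ range k, ∑ i ∈ Ico j k, g i = ∑ i ∈ range k, (i+1) * g i := by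
  induction k with
  | zero => simp
  | succ k ih =>
    have h1 : ∀ j ∈ range (k+1), ∑ i ∈ Ico j (k+1), g i = ∑ i ∈ Ico j k, g i + g k := by
      intro j hj
      exact Finset.sum_Ico_succ_top (by simp at hj; omega) g
    rw [Finset.sum_congr rfl h1, Finset.sum_add_distrib, Finset.sum_const, card_range,
      smul_eq_mul, sum_range_succ, Finset.Ico_self, Finset.sum_empty, ih,
      sum_range_succ (f := fun i => (i+1) * g i)]
    omega

lemma tele3_aux (a : ℕ → ℕ) (d : ℕ) : ∀ j, (∀ i, a (i+1) ≤ a i) →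
    ∑ i ∈ Ico j (j+d), (a i - a (i+1)) + a (j+d) = a j := by
  induction d with
  | zero => simp
  | succ d ih =>
    intro j ha
    rw [Finset.sum_eq_sum_Ico_succ_bot (by omega : j < j + (d+1))]
    have h1 : j + (d+1) = (j+1) + d := by omega
    rw [h1]
    have h2 := ih (j+1) ha
    have := ha j
    omega

lemma tele3 (a : ℕ → ℕ) (ha : ∀ i, a (i+1) ≤ a i) (k : ℕ) (hk : a k = 0) (j : ℕ) :
    ∑ i ∈ Ico j k, (a i - a (i+1)) = a j := by
  rcases le_or_gt k j with h | h
  · rw [Finset.Ico_eq_empty (by omega), Finset.sum_empty]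
    have : a j ≤ a k := by
      have : Antitone a := antitone_nat_of_succ_le ha
      exact this h
    omega
  · have h1 := tele3_aux a (k - j) j ha
    rw [show j + (k - j) = k by omega] at h1
    omega


abbrev Links (k : ℕ) : Type :=
  {c : Fin k → Fin (k+1) // ∑ i : Fin k, ((i : ℕ) + 1) * ((c i : ℕ)) = k}

abbrev Delta (k : ℕ) : Type := Σ c : Links k, ∀ i : Fin k, Fin 3 → Fin ((c.1 i : ℕ) + 1)

/-- abbreviations for the inverse construction -/
def cf {k : ℕ} (x : Delta k) : ℕ → ℕ := fun i => if h : i < k then (x.1.1 ⟨i, h⟩ : ℕ) else 0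

def tf {k : ℕ} (x : Delta k) : ℕ → Fin 3 → ℕ :=
  fun i j => if h : i < k then (x.2 ⟨i, h⟩ j : ℕ) else 0

def aOf {k : ℕ} (x : Delta k) : ℕ → ℕ := fun j => ∑ i ∈ Ico j k, cf x i

lemma aOf_succ {k : ℕ} (x : Delta k) (i : ℕ) : aOf x i = cf x i + aOf x (i+1) := by
  rcases lt_or_ge i k with h | h
  · rw [aOf, aOf, Finset.sum_eq_sum_Ico_succ_bot h]
  · have hc : cf x i = 0 := by rw [cf, dif_neg (by omega)]
    rw [aOf, aOf, Finset.Ico_eq_empty (by omega : ¬ i < k),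
      Finset.Ico_eq_empty (by omega : ¬ i + 1 < k), hc, Finset.sum_empty, Nat.zero_add]

lemma tf_le_cf {k : ℕ} (x : Delta k) (i : ℕ) (j : Fin 3) : tf x i j ≤ cf x i := by
  rw [tf, cf]
  split
  · exact Fin.is_le _
  · exact le_refl 0

lemma aOf_zero {k : ℕ} (x : Delta k) (j : ℕ) (hj : k ≤ j) : aOf x j = 0 := by
  rw [aOf, Finset.Ico_eq_empty (by omega), Finset.sum_empty]

def mkD {k : ℕ} (x : Delta k) : DFold 3 where
  a := aOf x
  b := fun i j => aOf x (i+1) + tf x i j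
  upper := fun i j => by
    show aOf x (i+1) + tf x i j ≤ aOf x i
    have h1 := aOf_succ x i
    have h2 := tf_le_cf x i j
    omega
  lower := fun i j => Nat.le_add_right _ _
  fin := ⟨k, aOf_zero x⟩

lemma mkD_finsum {k : ℕ} (x : Delta k) : ∑ᶠ i, (mkD x).a i = k := by
  rw [finsum_a_eq (mkD x) (aOf_zero x)]
  show ∑ j ∈ range k, aOf x j = k
  have h1 : ∑ j ∈ range k, aOf x j = ∑ i ∈ range k, (i+1) * cf x i := tele2 (cf x) k
  rw [h1]
  have h2 : ∑ i ∈ range k, (i+1) * cf x i = ∑ i : Fin k, ((i : ℕ)+1) * ((x.1.1 i : ℕ)) := by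
    rw [← Fin.sum_univ_eq_sum_range (fun i => (i+1) * cf x i)]
    apply Finset.sum_congr rfl
    intro i _
    rw [cf, dif_pos i.isLt]
  rw [h2, x.1.2]

/-- The forward map -/
def fwd {k : ℕ} (D : DFold 3) (hD : ∑ᶠ i, D.a i = k) : Delta k :=
  ⟨⟨fun i => ⟨D.a i - D.a (i+1), by
      have := a_le_sum D hD i
      omega⟩,
    by
      have h1 := tele1 D.a (fun i => (a_anti D (by omega : i ≤ i+1))) k
      rw [a_eventually_zero D hD k (le_refl k)] at h1
      rw [sum_range_a D hD] at h1
      rw [Fin.sum_univ_eq_sum_range (fun i => (i+1) * (D.a i - D.a (i+1)))]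
      omega⟩,
   fun i j => ⟨D.b i j - D.a (i+1), by
      have h1 := D.upper i j
      have h2 := D.lower i j
      simp only []
      omega⟩⟩

lemma delta_ext {k : ℕ} (c₁ c₂ : Links k) (t₁ : ∀ i : Fin k, Fin 3 → Fin ((c₁.1 i : ℕ) + 1))
    (t₂ : ∀ i : Fin k, Fin 3 → Fin ((c₂.1 i : ℕ) + 1)) (h : c₁ = c₂)
    (ht : ∀ i j, ((t₁ i j : ℕ)) = ((t₂ i j : ℕ))) :
    (⟨c₁, t₁⟩ : Delta k) = ⟨c₂, t₂⟩ := by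
  subst h
  have : t₁ = t₂ := by
    funext i j
    exact Fin.ext (ht i j)
  rw [this]

noncomputable def equivDelta (k : ℕ) : {D : DFold 3 // (∑ᶠ i, D.a i) = k} ≃ Delta k where
  toFun := fun p => fwd p.1 p.2
  invFun := fun x => ⟨mkD x, mkD_finsum x⟩
  left_inv := by
    rintro ⟨D, hD⟩
    apply Subtype.ext
    have hanti : ∀ i, D.a (i+1) ≤ D.a i := fun i => a_anti D (by omega)
    have hk0 : D.a k = 0 := a_eventually_zero D hD k (le_refl k)
    have ha : (mkD (fwd D hD)).a = D.a := by
      funext j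
      show aOf (fwd D hD) j = D.a j
      rw [aOf]
      have : ∀ i ∈ Ico j k, cf (fwd D hD) i = D.a i - D.a (i+1) := by
        intro i hi
        simp only [mem_Ico] at hi
        rw [cf, dif_pos hi.2]
        rfl
      rw [Finset.sum_congr rfl this]
      exact tele3 D.a hanti k hk0 j
    apply DFold.ext' ha
    funext i j
    show aOf (fwd D hD) (i+1) + tf (fwd D hD) i j = D.b i j
    have ha1 : aOf (fwd D hD) (i+1) = D.a (i+1) := by rw [show aOf (fwd D hD) = (mkD (fwd D hD)).a from rfl, ha]
    rw [ha1, tf]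
    rcases lt_or_ge i k with h | h
    · rw [dif_pos h]
      show D.a (i+1) + (D.b i j - D.a (i+1)) = D.b i j
      have := D.lower i j
      omega
    · rw [dif_neg (by omega)]
      have h1 : D.a i = 0 := a_eventually_zero D hD i (by omega)
      have h2 := D.upper i j
      have h3 : D.a (i+1) ≤ D.a i := hanti i
      omega
  right_inv := by
    rintro ⟨⟨c, hc⟩, t⟩
    apply delta_ext
    · -- first components agree
      apply Subtype.ext
      funext i
      apply Fin.ext
      show aOf ⟨⟨c, hc⟩, t⟩ i - aOf ⟨⟨c, hc⟩, t⟩ (i+1) = (c i : ℕ)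
      have h1 := aOf_succ (⟨⟨c, hc⟩, t⟩ : Delta k) i
      have h2 : cf (⟨⟨c, hc⟩, t⟩ : Delta k) i = (c i : ℕ) := by
        rw [cf, dif_pos i.isLt]
      omega
    · intro i j
      show (aOf ⟨⟨c, hc⟩, t⟩ (i+1) + tf ⟨⟨c, hc⟩, t⟩ i j) - aOf ⟨⟨c, hc⟩, t⟩ (i+1) = (t i j : ℕ)
      have h2 : tf (⟨⟨c, hc⟩, t⟩ : Delta k) i j = (t i j : ℕ) := by
        rw [tf, dif_pos i.isLt]
      omega


lemma sFold_eq_card (k : ℕ) : sFold 3 k = Fintype.card (Delta k) := by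
  rw [sFold, ← Nat.card_coe_set_eq]
  exact (Nat.card_congr (equivDelta k)).trans Nat.card_eq_fintype_card

lemma card_Delta (k : ℕ) :
    Fintype.card (Delta k) = ∑ c : Links k, ∏ i : Fin k, ((c.1 i : ℕ) + 1) ^ 3 := by
  rw [Fintype.card_sigma]
  apply Finset.sum_congr rfl
  intro c _
  rw [Fintype.card_pi]
  apply Finset.prod_congr rfl
  intro i _
  rw [Fintype.card_fun]
  simp

lemma Icc_one_sum (g : ℕ → ℕ) (k : ℕ) : ∑ m ∈ Icc 1 k, g m = ∑ i ∈ range k, g (i+1) := by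
  rw [← Finset.Ico_add_one_right_eq_Icc, Finset.sum_Ico_eq_sum_range]
  apply Finset.sum_congr (by norm_num)
  intro i _
  rw [Nat.add_comm]

lemma Icc_one_prod (g : ℕ → ℕ) (k : ℕ) : ∏ m ∈ Icc 1 k, g m = ∏ i ∈ range k, g (i+1) := by
  rw [← Finset.Ico_add_one_right_eq_Icc, Finset.prod_Ico_eq_prod_range]
  apply Finset.prod_congr (by norm_num)
  intro i _
  rw [Nat.add_comm]

/-- the finsupp associated to an element of `Links k` -/
noncomputable def toL (k : ℕ) (c : Links k) : ℕ →₀ ℕ :=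
  Finsupp.onFinset (Icc 1 k)
    (fun m => if h : m - 1 < k then m * (c.1 ⟨m - 1, h⟩ : ℕ) else 0)
    (by
      intro m hm
      rw [mem_Icc]
      by_cases h : m - 1 < k
      · rw [dif_pos h] at hm
        have hm0 : m ≠ 0 := by
          rintro rfl
          simp at hm
        omega
      · rw [dif_neg h] at hm
        exact absurd rfl hm)

lemma toL_apply (k : ℕ) (c : Links k) (m : ℕ) :
    toL k c m = if h : m - 1 < k then m * (c.1 ⟨m - 1, h⟩ : ℕ) else 0 := rfl

lemma toL_apply_succ (k : ℕ) (c : Links k) (i : ℕ) (h : i < k) :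
    toL k c (i + 1) = (i + 1) * (c.1 ⟨i, h⟩ : ℕ) := by
  rw [toL_apply, dif_pos (show i + 1 - 1 < k from h)]
  rfl

lemma mem_aux {k N : ℕ} (hkN : k ≤ N) (l : ℕ →₀ ℕ)
    (hl : l ∈ (finsuppAntidiag (Icc 1 N) k).filter (fun l : ℕ →₀ ℕ => ∀ m ∈ Icc 1 N, m ∣ l m)) :
    (∀ m, 1 ≤ m → m ≤ N → m ∣ l m) ∧ (∀ m, l m ≤ k) ∧ (∀ m, k < m → l m = 0) ∧
      ∑ m ∈ Icc 1 N, l m = k := by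
  rw [Finset.mem_filter, Finset.mem_finsuppAntidiag] at hl
  obtain ⟨⟨hsum, hsupp⟩, hdvd⟩ := hl
  have hsum' : ∑ m ∈ Icc 1 N, l m = k := hsum
  have hdvd' : ∀ m, 1 ≤ m → m ≤ N → m ∣ l m := fun m h1 h2 => hdvd m (mem_Icc.2 ⟨h1, h2⟩)
  have hout : ∀ m, m ∉ Icc 1 N → l m = 0 := by
    intro m hm
    by_contra h
    exact hm (hsupp (Finsupp.mem_support_iff.2 h))
  have hle : ∀ m, l m ≤ k := by
    intro m
    by_cases hm : m ∈ Icc 1 N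
    · have h1 : l m ≤ ∑ x ∈ Icc 1 N, l x := by
        simpa using Finset.single_le_sum (f := fun x => l x) (fun i _ => Nat.zero_le _) hm
      omega
    · rw [hout m hm]; exact Nat.zero_le _
  refine ⟨hdvd', hle, ?_, hsum'⟩
  intro m hm
  by_cases hmN : m ≤ N
  · have h1 : m ∣ l m := hdvd' m (by omega) hmN
    have h2 : l m ≤ k := hle m
    rcases Nat.eq_zero_or_pos (l m) with h | h
    · exact h
    · exact absurd (Nat.le_of_dvd h h1) (by omega)
  · exact hout m (by rw [mem_Icc]; omega)

/-- weight function used for reindexing -/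
def FF (k : ℕ) (c : Links k) : ℕ → ℕ :=
  fun i => if h : i < k then (i + 1) * (c.1 ⟨i, h⟩ : ℕ) else 0

/-- value function used for reindexing -/
def GG (k : ℕ) (c : Links k) : ℕ → ℕ :=
  fun i => if h : i < k then ((c.1 ⟨i, h⟩ : ℕ) + 1) ^ 3 else 1

lemma toL_FF (k : ℕ) (c : Links k) (i : ℕ) : toL k c (i + 1) = FF k c i := by
  rw [toL_apply, FF]
  rfl

lemma FF_fin (k : ℕ) (c : Links k) (i : Fin k) :
    FF k c (i : ℕ) = ((i : ℕ) + 1) * (c.1 i : ℕ) := by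
  rw [FF]
  simp only [dif_pos i.isLt, Fin.eta]

lemma GG_fin (k : ℕ) (c : Links k) (i : Fin k) :
    GG k c (i : ℕ) = ((c.1 i : ℕ) + 1) ^ 3 := by
  rw [GG]
  simp only [dif_pos i.isLt, Fin.eta]

lemma sum_toL (k N : ℕ) (hkN : k ≤ N) (c : Links k) :
    ∑ m ∈ Icc 1 N, toL k c m = k := by
  calc ∑ m ∈ Icc 1 N, toL k c m
      = ∑ m ∈ Icc 1 k, toL k c m := by
        symm
        apply Finset.sum_subset (Finset.Icc_subset_Icc_right hkN)
        intro m hmN hmk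
        rw [mem_Icc] at hmN hmk
        rw [toL_apply, dif_neg (by omega)]
    _ = ∑ i ∈ range k, toL k c (i + 1) := Icc_one_sum _ k
    _ = ∑ i ∈ range k, FF k c i := Finset.sum_congr rfl (fun i _ => toL_FF k c i)
    _ = ∑ i : Fin k, FF k c (i : ℕ) := (Fin.sum_univ_eq_sum_range (FF k c) k).symm
    _ = ∑ i : Fin k, ((i : ℕ) + 1) * (c.1 i : ℕ) :=
        Finset.sum_congr rfl (fun i _ => FF_fin k c i)
    _ = k := c.2

lemma toL_mem (k N : ℕ) (hkN : k ≤ N) (c : Links k) :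
    toL k c ∈ (finsuppAntidiag (Icc 1 N) k).filter
      (fun l : ℕ →₀ ℕ => ∀ m ∈ Icc 1 N, m ∣ l m) := by
  rw [Finset.mem_filter, Finset.mem_finsuppAntidiag]
  refine ⟨⟨sum_toL k N hkN c,
    (Finsupp.support_onFinset_subset).trans (Finset.Icc_subset_Icc_right hkN)⟩, ?_⟩
  intro m _
  rw [toL_apply]
  split
  · exact dvd_mul_right _ _
  · exact dvd_zero _

lemma links_sum (k N : ℕ) (hkN : k ≤ N) :
    ∑ c : Links k, ∏ i : Fin k, ((c.1 i : ℕ) + 1) ^ 3 =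
      ∑ l ∈ finsuppAntidiag (Icc 1 N) k,
        ∏ m ∈ Icc 1 N, (if m ∣ l m then (l m / m + 1) ^ 3 else 0) := by
  have hfilter :
      ∑ l ∈ (finsuppAntidiag (Icc 1 N) k).filter (fun l : ℕ →₀ ℕ => ∀ m ∈ Icc 1 N, m ∣ l m),
          ∏ m ∈ Icc 1 N, (if m ∣ l m then (l m / m + 1) ^ 3 else 0) =
        ∑ l ∈ finsuppAntidiag (Icc 1 N) k,
          ∏ m ∈ Icc 1 N, (if m ∣ l m then (l m / m + 1) ^ 3 else 0) := by
    apply Finset.sum_filter_of_ne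
    intro l _ hne m hm
    by_contra hdvd
    exact hne (Finset.prod_eq_zero hm (by rw [if_neg hdvd]))
  rw [← hfilter]
  refine Finset.sum_bij' (i := fun c _ => toL k c)
    (j := fun l hl =>
      (⟨fun i => ⟨l ((i : ℕ) + 1) / ((i : ℕ) + 1), by
          have h := (mem_aux hkN l hl).2.1 ((i : ℕ) + 1)
          have := Nat.div_le_self (l ((i : ℕ) + 1)) ((i : ℕ) + 1)
          omega⟩, by
        have hm := mem_aux hkN l hl
        have h1 : ∀ i : Fin k, ((i : ℕ) + 1) * (l ((i : ℕ) + 1) / ((i : ℕ) + 1)) = l ((i : ℕ) + 1) :=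
          fun i => Nat.mul_div_cancel'
            (hm.1 ((i : ℕ) + 1) (by omega) (by have := i.isLt; omega))
        calc ∑ i : Fin k, ((i : ℕ) + 1) * (l ((i : ℕ) + 1) / ((i : ℕ) + 1))
            = ∑ i : Fin k, l ((i : ℕ) + 1) := Finset.sum_congr rfl (fun i _ => h1 i)
          _ = ∑ i ∈ range k, l (i + 1) := Fin.sum_univ_eq_sum_range (fun i => l (i + 1)) k
          _ = ∑ m ∈ Icc 1 k, l m := (Icc_one_sum _ k).symm
          _ = ∑ m ∈ Icc 1 N, l m := by
              apply Finset.sum_subset (Finset.Icc_subset_Icc_right hkN)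
              intro m hmN hmk
              rw [mem_Icc] at hmN hmk
              exact hm.2.2.1 m (by omega)
          _ = k := hm.2.2.2⟩ : Links k))
    ?_ ?_ ?_ ?_ ?_
  · -- hi
    intro c _
    exact toL_mem k N hkN c
  · -- hj
    intro l hl
    exact Finset.mem_univ _
  · -- left_inv
    intro c _
    apply Subtype.ext
    funext i
    apply Fin.ext
    show toL k c ((i : ℕ) + 1) / ((i : ℕ) + 1) = (c.1 i : ℕ)
    rw [toL_FF, FF_fin, Nat.mul_div_cancel_left _ (by omega)]
  · -- right_inv
    intro l hl
    apply Finsupp.ext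
    intro m
    have hm := mem_aux hkN l hl
    rw [toL_apply]
    rcases Nat.eq_zero_or_pos m with rfl | hm1
    · have h0 : l 0 = 0 := by
        by_contra h
        rw [Finset.mem_filter, Finset.mem_finsuppAntidiag] at hl
        have := hl.1.2 (Finsupp.mem_support_iff.2 h)
        rw [mem_Icc] at this
        omega
      rw [h0]
      split
      · exact Nat.zero_mul _
      · rfl
    · by_cases h : m - 1 < k
      · rw [dif_pos h]
        show m * (l (m - 1 + 1) / (m - 1 + 1)) = l m
        rw [show m - 1 + 1 = m from by omega]
        exact Nat.mul_div_cancel' (hm.1 m hm1 (by omega))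
      · rw [dif_neg h]
        exact (hm.2.2.1 m (by omega)).symm
  · -- values agree
    intro c _
    calc ∏ i : Fin k, ((c.1 i : ℕ) + 1) ^ 3
        = ∏ i : Fin k, GG k c (i : ℕ) :=
          Finset.prod_congr rfl (fun i _ => (GG_fin k c i).symm)
      _ = ∏ i ∈ range k, GG k c i := Fin.prod_univ_eq_prod_range (GG k c) k
      _ = ∏ i ∈ range k,
            (if (i + 1) ∣ toL k c (i + 1) then (toL k c (i + 1) / (i + 1) + 1) ^ 3 else 0) := by
          apply Finset.prod_congr rfl
          intro i hi
          rw [mem_range] at hi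
          rw [toL_FF, FF, dif_pos hi, if_pos (dvd_mul_right _ _),
            Nat.mul_div_cancel_left _ (by omega), GG, dif_pos hi]
      _ = ∏ m ∈ Icc 1 k, (if m ∣ toL k c m then (toL k c m / m + 1) ^ 3 else 0) :=
          (Icc_one_prod (fun m => if m ∣ toL k c m then (toL k c m / m + 1) ^ 3 else 0) k).symm
      _ = ∏ m ∈ Icc 1 N, (if m ∣ toL k c m then (toL k c m / m + 1) ^ 3 else 0) := by
          apply Finset.prod_subset (Finset.Icc_subset_Icc_right hkN)
          intro m hmN hmk
          rw [mem_Icc] at hmN hmk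
          rw [toL_apply, dif_neg (by omega), if_pos (dvd_zero m), Nat.zero_div]
          norm_num



/-- backward difference operator -/
def dOp (f : ℕ → ℤ) : ℕ → ℤ
  | 0 => f 0
  | (k+1) => f (k+1) - f k

/-- the power series `f(X^m)` -/
noncomputable def Mm (m : ℕ) (f : ℕ → ℤ) : PowerSeries ℤ :=
  PowerSeries.mk fun x => if m ∣ x then f (x / m) else 0

lemma Mm_mul_one_sub (m : ℕ) (hm : 1 ≤ m) (f : ℕ → ℤ) :
    Mm m f * (1 - X ^ m) = Mm m (dOp f) := by
  ext k
  rw [mul_sub, mul_one, map_sub, PowerSeries.coeff_mul_X_pow']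
  simp only [Mm, coeff_mk]
  by_cases h : m ∣ k
  · obtain ⟨c, rfl⟩ := h
    have hm0 : 0 < m := hm
    rcases c with _ | j
    · simp only [Nat.mul_zero, Nat.zero_div, Nat.dvd_zero, if_true]
      rw [if_neg (by omega)]
      simp [dOp]
    · have h1 : m ≤ m * (j + 1) := Nat.le_mul_of_pos_right m (by omega)
      rw [if_pos h1]
      have h2 : m * (j + 1) - m = m * j := by ring_nf; omega
      rw [h2]
      rw [if_pos (Dvd.intro j rfl), if_pos (Dvd.intro (j+1) rfl)]
      rw [Nat.mul_div_cancel_left _ hm0, Nat.mul_div_cancel_left _ hm0]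
      simp [dOp]
  · rw [if_neg h]
    split_ifs with h1 h2
    · exfalso
      apply h
      have := Nat.dvd_add h2 (dvd_refl m)
      rwa [Nat.sub_add_cancel h1] at this
    · ring
    · ring

lemma dOp4 : dOp (dOp (dOp (dOp (fun c => ((c : ℤ) + 1) ^ 3)))) =
    fun k => if k = 0 then 1 else if k = 1 then 4 else if k = 2 then 1 else 0 := by
  funext k
  match k with
  | 0 => norm_num [dOp]
  | 1 => norm_num [dOp]
  | 2 => norm_num [dOp]
  | 3 => norm_num [dOp]
  | (j+4) =>
    simp only [dOp]
    push_cast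
    ring_nf

lemma Mm_g4 (m : ℕ) (hm : 1 ≤ m) :
    Mm m (fun k => if k = 0 then 1 else if k = 1 then 4 else if k = 2 then 1 else 0) =
      1 + 4 * X ^ m + X ^ (2 * m) := by
  ext k
  simp only [Mm, coeff_mk, map_add, PowerSeries.coeff_one, coeff_X_pow]
  have h4 : (coeff (R := ℤ) k) (4 * X ^ m) = if k = m then 4 else 0 := by
    have : (4 : ℤ⟦X⟧) = C (4 : ℤ) := by norm_num
    rw [this, coeff_C_mul, coeff_X_pow]
    split_ifs <;> norm_num
  rw [h4]
  by_cases h : m ∣ k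
  · obtain ⟨c, rfl⟩ := h
    have hm0 : 0 < m := hm
    rw [Nat.mul_div_cancel_left _ hm0]
    rcases c with _ | _ | _ | j
    · simp; omega
    · have h1 : m * 1 ≠ 0 := by omega
      have h2 : m * 1 = m := by omega
      simp [h1, h2]; omega
    · have h1 : m * 2 ≠ 0 := by omega
      have h2 : m * 2 ≠ m := by omega
      have h3 : m * 2 = 2 * m := by ring
      simp [h1, h2, h3]
      split_ifs <;> omega
    · have h1 : m * (j + 3) ≠ 0 := by positivity
      have h2 : m * (j + 3) ≠ m := by nlinarith
      have h3 : m * (j + 3) ≠ 2 * m := by nlinarith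
      simp [h1, h2, h3]
  · have h1 : k ≠ 0 := by rintro rfl; exact h (dvd_zero m)
    have h2 : k ≠ m := by rintro rfl; exact h dvd_rfl
    have h3 : k ≠ 2 * m := by rintro rfl; exact h (dvd_mul_left m 2)
    simp [h, h1, h2, h3]

lemma keyB (m : ℕ) (hm : 1 ≤ m) :
    Mm m (fun c => ((c : ℤ) + 1) ^ 3) * (1 - X ^ m) ^ 4 =
      1 + 4 * X ^ m + X ^ (2 * m) := by
  have : Mm m (fun c => ((c : ℤ) + 1) ^ 3) * (1 - X ^ m) ^ 4 =
      (((Mm m (fun c => ((c : ℤ) + 1) ^ 3) * (1 - X ^ m)) * (1 - X ^ m)) * (1 - X ^ m))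
        * (1 - X ^ m) := by ring
  rw [this, Mm_mul_one_sub m hm, Mm_mul_one_sub m hm, Mm_mul_one_sub m hm,
    Mm_mul_one_sub m hm, dOp4, Mm_g4 m hm]


lemma keyA (k N : ℕ) (hkN : k ≤ N) :
    (PowerSeries.coeff (R := ℤ) k) (∏ m ∈ Icc 1 N, Mm m (fun c => ((c : ℤ) + 1) ^ 3)) =
      (sFold 3 k : ℤ) := by
  rw [PowerSeries.coeff_prod]
  have hcast : ∀ l : ℕ →₀ ℕ,
      ∏ m ∈ Icc 1 N, (PowerSeries.coeff (R := ℤ) (l m)) (Mm m (fun c => ((c : ℤ) + 1) ^ 3)) =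
        ((∏ m ∈ Icc 1 N, (if m ∣ l m then (l m / m + 1) ^ 3 else 0) : ℕ) : ℤ) := by
    intro l
    rw [Nat.cast_prod]
    apply Finset.prod_congr rfl
    intro m _
    rw [Mm, PowerSeries.coeff_mk]
    split_ifs with h
    · push_cast; ring
    · rfl
  rw [Finset.sum_congr rfl (fun l _ => hcast l), ← Nat.cast_sum,
    ← links_sum k N hkN, ← card_Delta k, ← sFold_eq_card k]

end SchmidtAux

/-- The generating function identity
`∑_{n≥0} s_3(n) qⁿ = ∏_{n≥1} (1 + 4qⁿ + q^{2n}) / (1 - qⁿ)⁴` in `ℤ⟦q⟧`, stated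
coefficient-wise after clearing denominators: both sides of the infinite-product
identity have `n`-th coefficient equal to that of the partial product over the first
`N ≥ n` factors, since every further factor is `1 + O(q^{N+1})`. -/
theorem schmidt_threefold_generating_function (n N : ℕ) (hnN : n ≤ N) :
    PowerSeries.coeff (R := ℤ) n
        ((PowerSeries.mk fun m => (sFold 3 m : ℤ)) *
          ∏ m ∈ Finset.Icc 1 N, (1 - (X : ℤ⟦X⟧) ^ m) ^ 4) =
      PowerSeries.coeff (R := ℤ) n
        (∏ m ∈ Finset.Icc 1 N,
          (1 + 4 * (X : ℤ⟦X⟧) ^ m + (X : ℤ⟦X⟧) ^ (2 * m))) := by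
  have h1 : PowerSeries.coeff (R := ℤ) n
      ((PowerSeries.mk fun m => (sFold 3 m : ℤ)) *
        ∏ m ∈ Finset.Icc 1 N, (1 - (X : ℤ⟦X⟧) ^ m) ^ 4) =
      PowerSeries.coeff (R := ℤ) n
        ((∏ m ∈ Finset.Icc 1 N, SchmidtAux.Mm m (fun c => ((c : ℤ) + 1) ^ 3)) *
          ∏ m ∈ Finset.Icc 1 N, (1 - (X : ℤ⟦X⟧) ^ m) ^ 4) := by
    rw [PowerSeries.coeff_mul, PowerSeries.coeff_mul]
    apply Finset.sum_congr rfl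
    intro p hp
    rw [Finset.HasAntidiagonal.mem_antidiagonal] at hp
    have hp1 : p.1 ≤ N := by omega
    rw [PowerSeries.coeff_mk, ← SchmidtAux.keyA p.1 N hp1]
  rw [h1, ← Finset.prod_mul_distrib]
  congr 1
  apply Finset.prod_congr rfl
  intro m hm
  rw [Finset.mem_Icc] at hm
  exact SchmidtAux.keyB m hm.1
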